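/- Let J ∈ ℝ^{k×k} be nilpotent, B ∈ ℝ^{k×l}, and K ∈ ℝ^{r×k}. If the matrix [J B] ∈ ℝ^{k×(k+l)} has full row rank (rank [J B] = k) and K J^i B = 0 for all integers i ≥ 1, then K J = 0. -/

import Mathlib

open Matrix

lemma aux_cancel {k r : ℕ} {m : Type*} [Fintype m] {N : Matrix (Fin k) m ℝ}
    (hsurj : Function.Surjective N.mulVecLin)
    {M : Matrix (Fin r) (Fin k) ℝ} (h : M * N = 0) : M = 0 := by
  have hcomp : M.mulVecLin.comp N.mulVecLin = 0 := by
    rw [← Matrix.mulVecLin_mul, h, Matrix.mulVecLin_zero]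
  have hz : M.mulVecLin = 0 := by
    apply LinearMap.ext; intro v
    obtain ⟨w, rfl⟩ := hsurj v
    simpa using congrFun (congrArg DFunLike.coe hcomp) w
  ext i j
  have h2 := congrFun (LinearMap.congr_fun hz (Pi.single j 1)) i
  simpa [Matrix.mulVecLin_apply, Matrix.mulVec_single] using h2

/-- If `J` is nilpotent, `[J B]` has full row rank, and `K Jⁱ B = 0` for all `i ≥ 1`,
then `K J = 0`. -/
theorem stmt_13 {k l r : ℕ}
    (J : Matrix (Fin k) (Fin k) ℝ) (B : Matrix (Fin k) (Fin l) ℝ)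
    (K : Matrix (Fin r) (Fin k) ℝ)
    (hJ : IsNilpotent J)
    (hrank : (Matrix.fromCols J B).rank = k)
    (hKJB : ∀ i : ℕ, 1 ≤ i → K * J ^ i * B = 0) :
    K * J = 0 := by
  obtain ⟨n, hn⟩ := hJ
  have hsurj : Function.Surjective (Matrix.fromCols J B).mulVecLin := by
    rw [← LinearMap.range_eq_top]
    apply Submodule.eq_top_of_finrank_eq
    rw [Module.finrank_fintype_fun_eq_card]
    simpa [Matrix.rank] using hrank
  have main : ∀ j : ℕ, ∀ i : ℕ, 1 ≤ i → n ≤ i + j → K * J ^ i = 0 := by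
    intro j
    induction j with
    | zero =>
      intro i hi hni
      have : J ^ i = 0 := by
        calc J ^ i = J ^ n * J ^ (i - n) := by
              rw [← pow_add]; congr 1; omega
          _ = 0 := by rw [hn, zero_mul]
      simp [this]
    | succ j ih =>
      intro i hi hni
      rcases le_or_gt n (i + j) with h | h
      · exact ih i hi h
      · have h1 : K * J ^ (i + 1) = 0 := ih (i + 1) (by omega) (by omega)
        apply aux_cancel hsurj
        rw [Matrix.mul_fromCols]
        have : K * J ^ i * J = 0 := by
          rw [Matrix.mul_assoc, ← pow_succ]; exact h1
        rw [this, hKJB i hi]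
        ext x y
        rcases y with y | y <;> simp [Matrix.fromCols]
  simpa using main n 1 le_rfl (by omega)
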